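/- arXiv:1310.2784 — 2 statements merged into one kernel-verified Lean document; each statement's English description precedes it below -/
import Mathlib

section
/- Let h : X' → X be a finite dominant morphism of integral schemes, where X is normal (all stalks of its structure sheaf are integrally closed domains). Let K(X) and K(X') denote the function fields of X and X', so that h induces a field extension K(X) ⊆ K(X'). Then for every global section s ∈ Γ(X', O_{X'}), its image in K(X') is algebraic over K(X), and all coefficients of its minimal polynomial over K(X) lie in the image of the canonical injection Γ(X, O_X) → K(X). -/
open AlgebraicGeometry CategoryTheory TopologicalSpace

/-- A dominant morphism `h : X' ⟶ X` of irreducible schemes induces a map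
`K(X) ⟶ K(X')` on function fields, obtained by composing the canonical map
`K(X) = O_{X, η_X} ⟶ O_{X, h(η_{X'})}` (where `η` denotes generic points; this map exists
since `h(η_{X'})` specializes to `η_X`, `h` being dominant) with the stalk map
`O_{X, h(η_{X'})} ⟶ O_{X', η_{X'}} = K(X')` of `h` at the generic point of `X'`. -/
noncomputable def functionFieldMap {X X' : AlgebraicGeometry.Scheme}
    [IrreducibleSpace X] [IrreducibleSpace X'] (h : X' ⟶ X) [IsDominant h] :
    X.functionField ⟶ X'.functionField :=
  X.presheaf.stalkSpecializes
    (specializes_iff_mem_closure.mpr (by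
      have hsub : Set.range h.base ⊆ closure ({h.base (genericPoint X')} : Set X) := by
        rintro _ ⟨x, rfl⟩
        exact (((genericPoint_spec X').specializes trivial).map h.base.hom.continuous).mem_closure
      have hd : Dense (closure ({h.base (genericPoint X')} : Set X)) :=
        h.denseRange.mono hsub
      have huniv := hd.closure_eq
      rw [closure_closure] at huniv
      rw [huniv]
      trivial)) ≫ h.stalkMap (genericPoint X')

/-- A dominant morphism of irreducible (sober) schemes sends the generic point to
the generic point. -/
lemma base_genericPoint_eq {X X' : AlgebraicGeometry.Scheme}
    [IrreducibleSpace X] [IrreducibleSpace X'] (h : X' ⟶ X) [IsDominant h] :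
    h.base (genericPoint X') = genericPoint X := by
  have hsub : Set.range h.base ⊆ closure ({h.base (genericPoint X')} : Set X) := by
    rintro _ ⟨x, rfl⟩
    exact (((genericPoint_spec X').specializes trivial).map h.base.hom.continuous).mem_closure
  have hd : Dense (closure ({h.base (genericPoint X')} : Set X)) :=
    h.denseRange.mono hsub
  have huniv := hd.closure_eq
  rw [closure_closure] at huniv
  exact ((genericPoint_spec X).eq huniv).symm

/-- Compatibility of `functionFieldMap` with germs. -/
lemma functionFieldMap_germ_apply {X X' : AlgebraicGeometry.Scheme}
    [IrreducibleSpace X] [IrreducibleSpace X'] (h : X' ⟶ X) [IsDominant h]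
    (U : X.Opens) (hU : genericPoint X ∈ U) (hU' : genericPoint X' ∈ h ⁻¹ᵁ U) (a : Γ(X, U)) :
    functionFieldMap h (X.presheaf.germ U (genericPoint X) hU a) =
      X'.presheaf.germ (h ⁻¹ᵁ U) (genericPoint X') hU' (h.app U a) := by
  show (X.presheaf.stalkSpecializes _ ≫ h.stalkMap (genericPoint X'))
      (X.presheaf.germ U (genericPoint X) hU a) = _
  rw [CommRingCat.comp_apply, TopCat.Presheaf.germ_stalkSpecializes_apply,
    AlgebraicGeometry.Scheme.Hom.germ_stalkMap_apply]

/-- An element of the function field of an integral scheme which near every point comes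
from a local section is the image of a global section. -/
lemma mem_range_germToFunctionField_of_forall {X : AlgebraicGeometry.Scheme} [IsIntegral X]
    (c : X.functionField)
    (hc : ∀ x : X, ∃ (U : X.Opens) (_ : x ∈ U) (hη : genericPoint X ∈ U) (a : Γ(X, U)),
      X.presheaf.germ U (genericPoint X) hη a = c) :
    haveI : Nonempty (⊤ : X.Opens) := ⟨⟨genericPoint X, trivial⟩⟩
    c ∈ Set.range (X.germToFunctionField ⊤) := by
  haveI : Nonempty (⊤ : X.Opens) := ⟨⟨genericPoint X, trivial⟩⟩
  choose U hxU hηU a ha using hc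
  have hcomp : TopCat.Presheaf.IsCompatible X.presheaf U a := by
    intro i j
    have hmem : genericPoint X ∈ U i ⊓ U j := ⟨hηU i, hηU j⟩
    apply germ_injective_of_isIntegral X (genericPoint X) hmem
    rw [TopCat.Presheaf.germ_res_apply, TopCat.Presheaf.germ_res_apply, ha i, ha j]
  obtain ⟨gl, hgl, -⟩ := X.sheaf.existsUnique_gluing' U ⊤ (fun i => homOfLE le_top)
    (fun p hp => Opens.mem_iSup.mpr ⟨p, hxU p⟩) a hcomp
  refine ⟨gl, ?_⟩
  obtain ⟨x⟩ := (inferInstance : Nonempty X)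
  have h1 : X.presheaf.map (homOfLE le_top : U x ⟶ ⊤).op gl = a x := hgl x
  have h2 := congrArg (X.presheaf.germ (U x) (genericPoint X) (hηU x)) h1
  erw [TopCat.Presheaf.germ_res_apply, ha x] at h2
  exact h2

open Polynomial in
/-- Let `h : X' ⟶ X` be a finite dominant morphism of integral schemes, with `X` normal
(all stalks of `O_X` are integrally closed domains).  Then for every global section
`s ∈ Γ(X', O_{X'})`, its image in the function field `K(X')` is algebraic over `K(X)`,
and every coefficient of its minimal polynomial over `K(X)` lies in the image of the
canonical injection `Γ(X, O_X) → K(X)`. -/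
theorem minpoly_coeff_mem_global_sections_of_finite_dominant
    {X X' : AlgebraicGeometry.Scheme} [IsIntegral X] [IsIntegral X']
    (hnormal : ∀ x : X, IsIntegrallyClosed (X.presheaf.stalk x))
    (h : X' ⟶ X) [IsFinite h] [IsDominant h]
    (s : Γ(X', ⊤)) :
    haveI : Nonempty (⊤ : X.Opens) := ⟨⟨genericPoint X, trivial⟩⟩
    haveI : Nonempty (⊤ : X'.Opens) := ⟨⟨genericPoint X', trivial⟩⟩
    letI : Algebra X.functionField X'.functionField := RingHom.toAlgebra (functionFieldMap h).hom
    IsAlgebraic X.functionField (X'.germToFunctionField ⊤ s) ∧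
      ∀ n : ℕ, (minpoly X.functionField (X'.germToFunctionField ⊤ s)).coeff n ∈
        Set.range (X.germToFunctionField ⊤) := by
  haveI : Nonempty (⊤ : X.Opens) := ⟨⟨genericPoint X, trivial⟩⟩
  haveI : Nonempty (⊤ : X'.Opens) := ⟨⟨genericPoint X', trivial⟩⟩
  letI : Algebra X.functionField X'.functionField := RingHom.toAlgebra (functionFieldMap h).hom
  set t : X'.functionField := X'.germToFunctionField ⊤ s with ht
  -- key pointwise fact : `t` is integral over every stalk of `X`
  have key : ∀ x : X, (((functionFieldMap h).hom.comp
      (X.presheaf.stalkSpecializes ((genericPoint_spec X).specializes trivial) :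
          X.presheaf.stalk x ⟶ X.functionField).hom)).IsIntegralElem t := by
    intro x
    set U : X.Opens := (X.affineCover.f (X.affineCover.idx x)).opensRange with hUdef
    have hxU : x ∈ U := X.affineCover.covers x
    have hUaff : IsAffineOpen U := isAffineOpen_opensRange _
    haveI : Nonempty U := ⟨⟨x, hxU⟩⟩
    have hηU : genericPoint X ∈ U :=
      ((genericPoint_spec X).mem_open_set_iff U.isOpen).mpr (by simpa using ‹Nonempty U›)
    have hη'U : genericPoint X' ∈ h ⁻¹ᵁ U := by
      show h.base (genericPoint X') ∈ U
      rw [base_genericPoint_eq h]; exact hηU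
    -- the restriction of `s`
    set b : Γ(X', h ⁻¹ᵁ U) := X'.presheaf.map (homOfLE (le_top : h ⁻¹ᵁ U ≤ ⊤)).op s with hb
    have htb : X'.presheaf.germ (h ⁻¹ᵁ U) (genericPoint X') hη'U b = t := by
      rw [hb, TopCat.Presheaf.germ_res_apply]
    -- `b` is integral over `Γ(X, U)`
    have hfin : (h.app U).hom.Finite := IsFinite.finite_app h U hUaff
    obtain ⟨p, pmonic, hp⟩ := hfin.to_isIntegral b
    -- push the integral equation to the function field
    set ψ : Γ(X', h ⁻¹ᵁ U) →+* X'.functionField :=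
      (X'.presheaf.germ (h ⁻¹ᵁ U) (genericPoint X') hη'U).hom with hψ
    have hφ : Polynomial.eval₂ (ψ.comp (h.app U).hom) t p = 0 := by
      have := Polynomial.hom_eval₂ p (h.app U).hom ψ b
      rw [hp, map_zero] at this
      rw [← htb]
      exact this.symm
    -- transfer along the germ map to the stalk at `x`
    set γ : Γ(X, U) →+* X.presheaf.stalk x := (X.presheaf.germ U x hxU).hom with hγ
    refine ⟨p.map γ, pmonic.map γ, ?_⟩
    rw [Polynomial.eval₂_map]
    have hcompose : (((functionFieldMap h).hom.comp
        (X.presheaf.stalkSpecializes ((genericPoint_spec X).specializes trivial) :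
          X.presheaf.stalk x ⟶ X.functionField).hom)).comp γ = ψ.comp (h.app U).hom := by
      ext a0
      show (functionFieldMap h) (X.presheaf.stalkSpecializes _ (X.presheaf.germ U x hxU a0)) =
        ψ ((h.app U) a0)
      rw [TopCat.Presheaf.germ_stalkSpecializes_apply]
      exact functionFieldMap_germ_apply h U hηU hη'U a0
    rw [hcompose, hφ]
  -- the algebraicity part
  have hK : IsIntegral X.functionField t := by
    obtain ⟨x⟩ := (inferInstance : Nonempty X)
    obtain ⟨p, pmonic, hp⟩ := key x
    refine ⟨p.map (X.presheaf.stalkSpecializes ((genericPoint_spec X).specializes trivial) :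
          X.presheaf.stalk x ⟶ X.functionField).hom, pmonic.map _, ?_⟩
    rw [Polynomial.eval₂_map]
    exact hp
  refine ⟨hK.isAlgebraic, fun n => ?_⟩
  -- the coefficient part
  apply mem_range_germToFunctionField_of_forall
  intro x
  letI : Algebra (X.presheaf.stalk x) X'.functionField :=
    RingHom.toAlgebra ((functionFieldMap h).hom.comp
      (X.presheaf.stalkSpecializes ((genericPoint_spec X).specializes trivial) :
          X.presheaf.stalk x ⟶ X.functionField).hom)
  haveI : IsScalarTower (X.presheaf.stalk x) X.functionField X'.functionField := by
    apply IsScalarTower.of_algebraMap_eq'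
    rfl
  haveI := hnormal x
  haveI : IsDomain (X.presheaf.stalk x) :=
    (IsFractionRing.injective (X.presheaf.stalk x) X.functionField).isDomain
  have hRint : IsIntegral (X.presheaf.stalk x) t := key x
  have hmp := minpoly.isIntegrallyClosed_eq_field_fractions' X.functionField hRint
  rw [hmp, Polynomial.coeff_map]
  set r : X.presheaf.stalk x := (minpoly (X.presheaf.stalk x) t).coeff n with hr
  obtain ⟨V, hxV, aV, haV⟩ := TopCat.Presheaf.germ_exist X.presheaf (x := x) r
  refine ⟨V, hxV, (((genericPoint_spec X).specializes trivial).mem_open V.isOpen hxV), aV, ?_⟩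
  have : algebraMap (X.presheaf.stalk x) X.functionField r =
      X.presheaf.stalkSpecializes ((genericPoint_spec X).specializes trivial) r := rfl
  rw [this, ← haV, TopCat.Presheaf.germ_stalkSpecializes_apply]
end

section
/- Let k be a field of characteristic p > 0 and let k[X] be the polynomial ring in one variable over k. Consider the additive group homomorphism ℘ : k[X] → k[X] given by ℘(f) = f^p − f. Then the quotient additive group k[X]/℘(k[X]) is infinite. -/
/-- The Artin–Schreier map `℘ : k[X] → k[X]`, `f ↦ f ^ p - f`, as a homomorphism of
additive groups (it is additive since Frobenius is additive in characteristic `p`). -/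
noncomputable def artinSchreierMap (k : Type*) [Field k] (p : ℕ) [Fact (Nat.Prime p)]
    [CharP k p] : Polynomial k →+ Polynomial k :=
  AddMonoidHom.mk' (fun f => f ^ p - f) (by
    intro f g
    have : ExpChar (Polynomial k) p := by
      have : CharP (Polynomial k) p := inferInstance
      exact ExpChar.prime (Fact.out)
    show (f + g) ^ p - (f + g) = (f ^ p - f) + (g ^ p - g)
    rw [add_pow_char]
    ring)

open Polynomial in
lemma artinSchreier_key (k : Type*) [Field k] (p : ℕ) [Fact (Nat.Prime p)]
    [CharP k p] (a b : ℕ) (hab : a < b) (f : Polynomial k) :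
    f ^ p - f ≠ (X : Polynomial k) ^ (p * b + 1) - X ^ (p * a + 1) := by
  have hp : 2 ≤ p := (Fact.out : Nat.Prime p).two_le
  have hlt : p * a + 1 < p * b + 1 := by
    have := (Nat.mul_lt_mul_left (by omega : 0 < p)).mpr hab
    omega
  have hdeg : ((X : Polynomial k) ^ (p * b + 1) - X ^ (p * a + 1)).natDegree = p * b + 1 := by
    rw [natDegree_sub_eq_left_of_natDegree_lt] <;> simp [hlt]
  intro h
  rcases Nat.eq_zero_or_pos f.natDegree with hd | hd
  · have h1 : (f ^ p - f).natDegree ≤ 0 := by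
      refine le_trans (natDegree_sub_le _ _) ?_
      simp [natDegree_pow, hd]
    rw [h, hdeg] at h1
    omega
  · have hfp : (f ^ p).natDegree = p * f.natDegree := by simp [natDegree_pow]
    have h2 : (f ^ p - f).natDegree = p * f.natDegree := by
      rw [natDegree_sub_eq_left_of_natDegree_lt, hfp]
      rw [hfp]
      calc f.natDegree < 2 * f.natDegree := by omega
        _ ≤ p * f.natDegree := Nat.mul_le_mul_right _ hp
    rw [h, hdeg] at h2
    have hdvd : p ∣ 1 :=
      (Nat.dvd_add_right (dvd_mul_right p b)).mp (h2 ▸ dvd_mul_right p f.natDegree)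
    have := Nat.le_of_dvd one_pos hdvd
    omega

/-- Let `k` be a field of characteristic `p > 0`. Then the quotient additive group
`k[X] / ℘(k[X])`, where `℘(f) = f ^ p - f` is the Artin–Schreier map, is infinite. -/
theorem infinite_artinSchreier_quotient (k : Type*) [Field k] (p : ℕ) [Fact (Nat.Prime p)]
    [CharP k p] :
    Infinite (Polynomial k ⧸ (artinSchreierMap k p).range) := by
  refine Infinite.of_injective
    (fun n : ℕ => QuotientAddGroup.mk ((Polynomial.X : Polynomial k) ^ (p * n + 1))) ?_
  intro m n h
  by_contra hmn
  rw [QuotientAddGroup.eq] at h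
  obtain ⟨f, hf⟩ := h
  simp only [artinSchreierMap, AddMonoidHom.mk'_apply] at hf
  have hneg : (-f) ^ p - (-f) = -(f ^ p - f) := by
    rw [show (-f) = 0 - f by ring, sub_pow_char, zero_pow (Nat.Prime.ne_zero Fact.out)]
    ring
  rcases lt_trichotomy m n with hlt | heq | hlt
  · exact artinSchreier_key k p m n hlt f (by rw [hf]; ring)
  · exact hmn heq
  · exact artinSchreier_key k p n m hlt (-f) (by rw [hneg, hf]; ring)
end
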